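/- Let L : (0,1] → ℝ be monotone non-increasing with L(1) = 0, L bounded, and lim_{u→0+} L(u) = c. Define F(ρ) = L(ρ)/ρ − ∫_ρ^1 L(u)/u² du. Then lim_{ρ→0+} ∫_ρ^1 F(u) du = c, i.e., the L* estimator is unbiased. -/

import Mathlib

open MeasureTheory Set Filter

lemma lstar_integ_inv_sq {a b : ℝ} (ha : 0 < a) (hab : a ≤ b) :
    ∫ x in a..b, (x ^ 2)⁻¹ = a⁻¹ - b⁻¹ := by
  have h : ∀ x ∈ Set.uIcc a b, HasDerivAt (fun y : ℝ => -y⁻¹) ((x ^ 2)⁻¹) x := by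
    intro x hx
    rw [Set.uIcc_of_le hab] at hx
    have hx0 : x ≠ 0 := ne_of_gt (lt_of_lt_of_le ha hx.1)
    simpa [Pi.neg_def] using (hasDerivAt_inv hx0).neg
  have hint : IntervalIntegrable (fun x : ℝ => (x ^ 2)⁻¹) volume a b := by
    apply ContinuousOn.intervalIntegrable
    apply ContinuousOn.inv₀ (continuous_pow 2).continuousOn
    intro x hx
    rw [Set.uIcc_of_le hab] at hx
    exact pow_ne_zero 2 (ne_of_gt (lt_of_lt_of_le ha hx.1))
  rw [intervalIntegral.integral_eq_sub_of_hasDerivAt h hint]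
  ring

lemma lstar_anti_div_pow {g : ℝ → ℝ} (hg : Antitone g) (hg0 : ∀ x, 0 ≤ g x) (n : ℕ) {a : ℝ}
    (ha : 0 < a) : AntitoneOn (fun x => g x / x ^ n) (Set.Ici a) := by
  intro x hx y hy hxy
  have hx0 : 0 < x := lt_of_lt_of_le ha hx
  exact div_le_div₀ (hg0 x) (hg hxy) (pow_pos hx0 n) (pow_le_pow_left₀ hx0.le hxy n)

lemma lstar_ii {g : ℝ → ℝ} (hg : Antitone g) (hg0 : ∀ x, 0 ≤ g x) (n : ℕ) {ρ a b : ℝ}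
    (hρ : 0 < ρ) (ha : ρ ≤ a) (hb : ρ ≤ b) :
    IntervalIntegrable (fun x => g x / x ^ n) volume a b := by
  apply AntitoneOn.intervalIntegrable
  apply (lstar_anti_div_pow hg hg0 n hρ).mono
  intro x hx
  exact Set.mem_Ici.2 (le_trans (le_inf ha hb) hx.1)

lemma lstar_ii_const {K a b : ℝ} (ha : 0 < a) (hab : a ≤ b) :
    IntervalIntegrable (fun x : ℝ => K * (x ^ 2)⁻¹) volume a b := by
  apply ContinuousOn.intervalIntegrable
  apply ContinuousOn.mul continuousOn_const
  apply ContinuousOn.inv₀ (continuous_pow 2).continuousOn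
  intro x hx
  rw [Set.uIcc_of_le hab] at hx
  exact pow_ne_zero 2 (ne_of_gt (lt_of_lt_of_le ha hx.1))

lemma lstar_const_int {K a b : ℝ} (ha : 0 < a) (hab : a ≤ b) :
    ∫ x in a..b, K * (x ^ 2)⁻¹ = K * (a⁻¹ - b⁻¹) := by
  rw [intervalIntegral.integral_const_mul, lstar_integ_inv_sq ha hab]

lemma lstar_identity {g : ℝ → ℝ} (hg : Antitone g) (hg0 : ∀ x, 0 ≤ g x) {ρ : ℝ}
    (hρ : 0 < ρ) (hρ1 : ρ ≤ 1) :
    ∫ u in ρ..1, (g u / u - ∫ x in u..1, g x / x ^ 2)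
      = ρ * ∫ x in ρ..1, g x / x ^ 2 := by
  have hmeas : Measurable fun x : ℝ => g x / x ^ 2 :=
    hg.measurable.div (measurable_id.pow_const 2)
  have ii2 : ∀ {a b : ℝ}, ρ ≤ a → ρ ≤ b →
      IntervalIntegrable (fun x => g x / x ^ 2) volume a b :=
    fun ha hb => lstar_ii hg hg0 2 hρ ha hb
  have hG : ContinuousOn (fun t => ∫ x in t..1, g x / x ^ 2) (Set.Icc ρ 1) := by
    have h1 : ContinuousOn (fun b => ∫ x in (1:ℝ)..b, g x / x ^ 2) (Set.uIcc ρ 1) :=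
      intervalIntegral.continuousOn_primitive_interval' (ii2 le_rfl hρ1) Set.right_mem_uIcc
    rw [Set.uIcc_of_le hρ1] at h1
    apply h1.neg.congr
    intro t _
    exact intervalIntegral.integral_symm 1 t
  have hS : {x : ℝ | ¬ContinuousAt g x}.Countable := hg.countable_not_continuousAt
  have hderiv : ∀ t ∈ Set.Ioo ρ 1 \ {x : ℝ | ¬ContinuousAt g x},
      HasDerivAt (fun t => -(t * ∫ x in t..1, g x / x ^ 2))
        (g t / t - ∫ x in t..1, g x / x ^ 2) t := by
    intro t ht
    have ht0 : 0 < t := lt_trans hρ ht.1.1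
    have hgt : ContinuousAt g t := not_not.mp ht.2
    have hc2 : ContinuousAt (fun x : ℝ => g x / x ^ 2) t :=
      hgt.div ((continuous_pow 2).continuousAt) (pow_ne_zero 2 ht0.ne')
    have hDG : HasDerivAt (fun u => ∫ x in u..1, g x / x ^ 2) (-(g t / t ^ 2)) t :=
      intervalIntegral.integral_hasDerivAt_left (ii2 ht.1.1.le hρ1)
        ⟨Set.univ, Filter.univ_mem, hmeas.aestronglyMeasurable.restrict⟩ hc2
    have hD := ((hasDerivAt_id t).fun_mul hDG).fun_neg
    refine hD.congr_deriv ?_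
    have h2 : t * (g t / t ^ 2) = g t / t := by
      field_simp
    simp only [id]
    rw [mul_neg, h2]
    ring
  have hcont : ContinuousOn (fun t => -(t * ∫ x in t..1, g x / x ^ 2)) (Set.Icc ρ 1) :=
    (continuous_id.continuousOn.mul hG).neg
  have hint : IntervalIntegrable (fun u => g u / u - ∫ x in u..1, g x / x ^ 2) volume ρ 1 := by
    have i1 : IntervalIntegrable (fun u => g u / u) volume ρ 1 := by
      simpa [pow_one] using lstar_ii hg hg0 1 hρ le_rfl hρ1
    have i2 : IntervalIntegrable (fun u => ∫ x in u..1, g x / x ^ 2) volume ρ 1 := by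
      apply ContinuousOn.intervalIntegrable
      rw [Set.uIcc_of_le hρ1]
      exact hG
    exact i1.sub i2
  have main := MeasureTheory.integral_eq_of_hasDerivAt_off_countable_of_le
    (fun t => -(t * ∫ x in t..1, g x / x ^ 2))
    (fun u => g u / u - ∫ x in u..1, g x / x ^ 2) hρ1 hS hcont hderiv hint
  rw [main]
  simp [intervalIntegral.integral_same]

set_option linter.unnecessarySeqFocus false in
lemma lstar_limit {g : ℝ → ℝ} {c : ℝ} (hg : Antitone g) (hg0 : ∀ x, 0 ≤ g x)
    (hgc : ∀ x, g x ≤ c) (hlim : Tendsto g (nhdsWithin 0 (Set.Ioi 0)) (nhds c)) :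
    Tendsto (fun ρ => ρ * ∫ x in ρ..1, g x / x ^ 2)
      (nhdsWithin 0 (Set.Ioi 0)) (nhds c) := by
  have hc0 : 0 ≤ c := le_trans (hg0 1) (hgc 1)
  rw [Metric.tendsto_nhdsWithin_nhds]
  intro ε hε
  have hε'0 : 0 < ε / 3 := by positivity
  obtain ⟨δ₀, hδ₀pos, hδ₀⟩ := Metric.tendsto_nhdsWithin_nhds.mp hlim (ε / 3) hε'0
  set d := min (δ₀ / 2) (1 / 2 : ℝ) with hd
  have hd0 : 0 < d := lt_min (by positivity) (by norm_num)
  have hd1 : d ≤ 1 := le_trans (min_le_right _ _) (by norm_num)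
  have hdδ : d < δ₀ := lt_of_le_of_lt (min_le_left _ _) (half_lt_self hδ₀pos)
  have hgd : ∀ x : ℝ, 0 < x → x ≤ d → c - ε / 3 ≤ g x := by
    intro x hx hxd
    have h := hδ₀ (Set.mem_Ioi.2 hx) (by
      rw [Real.dist_eq, sub_zero, abs_of_pos hx]; exact lt_of_le_of_lt hxd hdδ)
    rw [Real.dist_eq] at h
    have := (abs_lt.mp h).1
    linarith
  refine ⟨min d (ε / 3 * d / (c + 1)), lt_min hd0 (by positivity), ?_⟩
  intro ρ hρ hρδ
  have hρ0 : 0 < ρ := hρ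
  rw [Real.dist_eq, sub_zero, abs_of_pos hρ0] at hρδ
  have hρd : ρ < d := lt_of_lt_of_le hρδ (min_le_left _ _)
  have hρε : ρ < ε / 3 * d / (c + 1) := lt_of_lt_of_le hρδ (min_le_right _ _)
  have hρ1 : ρ ≤ 1 := le_trans hρd.le hd1
  have iA : IntervalIntegrable (fun x => g x / x ^ 2) volume ρ d :=
    lstar_ii hg hg0 2 hρ0 le_rfl hρd.le
  have iB : IntervalIntegrable (fun x => g x / x ^ 2) volume d 1 :=
    lstar_ii hg hg0 2 hρ0 hρd.le hρ1
  have hsplit : (∫ x in ρ..1, g x / x ^ 2)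
      = (∫ x in ρ..d, g x / x ^ 2) + ∫ x in d..1, g x / x ^ 2 :=
    (intervalIntegral.integral_add_adjacent_intervals iA iB).symm
  set A := ∫ x in ρ..d, g x / x ^ 2 with hA
  set B := ∫ x in d..1, g x / x ^ 2 with hB
  have hA_up : A ≤ c * (ρ⁻¹ - d⁻¹) := by
    rw [← lstar_const_int hρ0 hρd.le]
    apply intervalIntegral.integral_mono_on hρd.le iA (lstar_ii_const hρ0 hρd.le)
    intro x hx
    have hx0 : 0 < x := lt_of_lt_of_le hρ0 hx.1
    rw [div_eq_mul_inv]
    exact mul_le_mul_of_nonneg_right (hgc x) (by positivity)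
  have hA_lo : (c - ε / 3) * (ρ⁻¹ - d⁻¹) ≤ A := by
    rw [← lstar_const_int hρ0 hρd.le]
    apply intervalIntegral.integral_mono_on hρd.le (lstar_ii_const hρ0 hρd.le) iA
    intro x hx
    have hx0 : 0 < x := lt_of_lt_of_le hρ0 hx.1
    rw [div_eq_mul_inv]
    exact mul_le_mul_of_nonneg_right (hgd x hx0 hx.2) (by positivity)
  have hB_up : B ≤ c * (d⁻¹ - 1⁻¹) := by
    rw [← lstar_const_int hd0 hd1]
    apply intervalIntegral.integral_mono_on hd1 iB (lstar_ii_const hd0 hd1)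
    intro x hx
    have hx0 : 0 < x := lt_of_lt_of_le hd0 hx.1
    rw [div_eq_mul_inv]
    exact mul_le_mul_of_nonneg_right (hgc x) (by positivity)
  have hB_lo : 0 ≤ B := by
    apply intervalIntegral.integral_nonneg hd1
    intro u hu
    have hu0 : 0 < u := lt_of_lt_of_le hd0 hu.1
    exact div_nonneg (hg0 u) (by positivity)
  have e1 : ρ * (c * (ρ⁻¹ - d⁻¹)) = c - c * ρ / d := by
    field_simp
  have e2 : ρ * ((c - ε / 3) * (ρ⁻¹ - d⁻¹)) = (c - ε / 3) - (c - ε / 3) * ρ / d := by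
    field_simp
  have e3 : ρ * (c * (d⁻¹ - 1⁻¹)) = c * ρ / d - c * ρ := by
    field_simp
  have hq1 : ρ * A ≤ c - c * ρ / d := by
    rw [← e1]; exact mul_le_mul_of_nonneg_left hA_up hρ0.le
  have hq2 : ρ * B ≤ c * ρ / d - c * ρ := by
    rw [← e3]; exact mul_le_mul_of_nonneg_left hB_up hρ0.le
  have hq3 : (c - ε / 3) - (c - ε / 3) * ρ / d ≤ ρ * A := by
    rw [← e2]; exact mul_le_mul_of_nonneg_left hA_lo hρ0.le
  have hq4 : 0 ≤ ρ * B := mul_nonneg hρ0.le hB_lo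
  have hq5 : (c + 1) * ρ / d < ε / 3 := by
    rw [div_lt_iff₀ hd0]
    have h := (lt_div_iff₀ (by positivity : (0:ℝ) < c + 1)).mp hρε
    nlinarith
  have hq7 : (c - ε / 3) * ρ / d ≤ (c + 1) * ρ / d := by
    gcongr <;> linarith
  have hq6 : c * ρ / d ≤ (c + 1) * ρ / d := by
    gcongr <;> linarith
  have hcρ : 0 ≤ c * ρ := mul_nonneg hc0 hρ0.le
  rw [Real.dist_eq, hsplit, mul_add, abs_lt]
  constructor <;> linarith

theorem lstar_unbiased
    (L : ℝ → ℝ) (c : ℝ)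
    (hmono : AntitoneOn L (Set.Ioc (0:ℝ) 1))
    (hL1 : L 1 = 0)
    (hbdd : ∃ M : ℝ, ∀ u ∈ Set.Ioc (0:ℝ) 1, |L u| ≤ M)
    (hlim : Filter.Tendsto L (nhdsWithin 0 (Set.Ioi 0)) (nhds c)) :
    Filter.Tendsto (fun ρ => ∫ u in ρ..1, (L u / u - ∫ x in u..1, L x / x^2))
      (nhdsWithin 0 (Set.Ioi 0)) (nhds c) := by
  have hge0 : ∀ u ∈ Set.Ioc (0:ℝ) 1, 0 ≤ L u := by
    intro u hu
    have := hmono hu (Set.mem_Ioc.2 ⟨one_pos, le_rfl⟩) hu.2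
    rwa [hL1] at this
  have hlec : ∀ u ∈ Set.Ioc (0:ℝ) 1, L u ≤ c := by
    intro u hu
    apply ge_of_tendsto hlim
    filter_upwards [Ioo_mem_nhdsGT_of_mem ⟨le_refl (0:ℝ), hu.1⟩] with x hx
    exact hmono ⟨hx.1, le_trans hx.2.le hu.2⟩ hu hx.2.le
  set g : ℝ → ℝ := fun x => if 1 ≤ x then 0 else if x ≤ 0 then c else L x with hgdef
  have hgL : ∀ x ∈ Set.Ioc (0:ℝ) 1, g x = L x := by
    intro x hx
    by_cases h1 : 1 ≤ x
    · have hx1 : x = 1 := le_antisymm hx.2 h1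
      simp [hgdef, h1, hx1, hL1]
    · simp [hgdef, h1, not_le.mpr hx.1]
  have hc0 : 0 ≤ c := by
    apply ge_of_tendsto hlim
    filter_upwards [Ioo_mem_nhdsGT_of_mem ⟨le_refl (0:ℝ), one_pos⟩] with x hx
    exact hge0 x ⟨hx.1, hx.2.le⟩
  have hg0 : ∀ x, 0 ≤ g x := by
    intro x
    by_cases h1 : 1 ≤ x
    · simp [hgdef, h1]
    · by_cases h0 : x ≤ 0
      · simp [hgdef, h1, h0, hc0]
      · simp only [hgdef, if_neg h1, if_neg h0]
        exact hge0 x ⟨not_le.mp h0, (not_le.mp h1).le⟩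
  have hgc : ∀ x, g x ≤ c := by
    intro x
    by_cases h1 : 1 ≤ x
    · simp [hgdef, h1, hc0]
    · by_cases h0 : x ≤ 0
      · simp [hgdef, h1, h0]
      · simp only [hgdef, if_neg h1, if_neg h0]
        exact hlec x ⟨not_le.mp h0, (not_le.mp h1).le⟩
  have hganti : Antitone g := by
    intro x y hxy
    by_cases h1y : 1 ≤ y
    · simp only [hgdef, if_pos h1y]
      exact hg0 x
    · by_cases h0y : y ≤ 0
      · have h0x : x ≤ 0 := le_trans hxy h0y
        have h1x : ¬ (1:ℝ) ≤ x := by intro h; linarith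
        simp [hgdef, h1y, h0y, h1x, h0x]
      · have h1x : ¬ (1:ℝ) ≤ x := fun h => h1y (le_trans h hxy)
        by_cases h0x : x ≤ 0
        · simp only [hgdef, if_neg h1y, if_neg h0y, if_neg h1x, if_pos h0x]
          exact hlec y ⟨not_le.mp h0y, (not_le.mp h1y).le⟩
        · simp only [hgdef, if_neg h1y, if_neg h0y, if_neg h1x, if_neg h0x]
          exact hmono ⟨not_le.mp h0x, (lt_of_le_of_lt hxy (not_le.mp h1y)).le⟩
            ⟨not_le.mp h0y, (not_le.mp h1y).le⟩ hxy
  have hglim : Tendsto g (nhdsWithin 0 (Set.Ioi 0)) (nhds c) := by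
    apply hlim.congr'
    filter_upwards [Ioo_mem_nhdsGT_of_mem ⟨le_refl (0:ℝ), one_pos⟩] with x hx
    exact (hgL x ⟨hx.1, hx.2.le⟩).symm
  apply Tendsto.congr' ?_ (lstar_limit hganti hg0 hgc hglim)
  filter_upwards [Ioo_mem_nhdsGT_of_mem ⟨le_refl (0:ℝ), one_pos⟩] with ρ hρ
  have h1 : (∫ u in ρ..1, (g u / u - ∫ x in u..1, g x / x ^ 2))
      = ∫ u in ρ..1, (L u / u - ∫ x in u..1, L x / x ^ 2) := by
    apply intervalIntegral.integral_congr
    intro u hu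
    rw [Set.uIcc_of_le hρ.2.le] at hu
    have hu01 : u ∈ Set.Ioc (0:ℝ) 1 := ⟨lt_of_lt_of_le hρ.1 hu.1, hu.2⟩
    show g u / u - (∫ x in u..1, g x / x ^ 2) = L u / u - ∫ x in u..1, L x / x ^ 2
    rw [hgL u hu01]
    congr 1
    apply intervalIntegral.integral_congr
    intro x hx
    rw [Set.uIcc_of_le hu01.2] at hx
    show g x / x ^ 2 = L x / x ^ 2
    rw [hgL x ⟨lt_of_lt_of_le hu01.1 hx.1, hx.2⟩]
  rw [← h1, lstar_identity hganti hg0 hρ.1 hρ.2.le]
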